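/- Closed form of the activating volume on the first branch: let t ∈ [0,1], s = √(1 − t²), v ∈ [0,1] and c ∈ ℝ. Suppose v·Δκ·t ≤ d₂(v)·s, v·Δμ·s ≤ d₃(v)·t, and f^HS(t;v) = c. Define D = (c·(Δμ + Δκ) + (1 − 2t²)·(Δμ·κ⁺ − Δκ·μ⁺) + Δμ·Δκ·(s + t)²)² − 4·Δμ·Δκ·(κ⁺ + μ⁺)·(s + t)²·(c + (t² − 1)·μ⁻ − t²·κ⁻). Then D ≥ 0 and v = 1/2 + (c·(Δμ + Δκ) + (2t² − 1)·(Δκ·μ⁺ − Δμ·κ⁺) − √D) / (2·Δμ·Δκ·(t + s)²). -/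

import Mathlib

open Real

/-- The square root `s = √(1 - t²)`. -/
noncomputable def sHS (t : ℝ) : ℝ := Real.sqrt (1 - t ^ 2)

/-- The Hashin–Shtrikman correction term `q(t; v)` for two well-ordered isotropic
plane-stress phases with bulk moduli `κm < κp` and shear moduli `μm < μp`. -/
noncomputable def qHS (κm κp μm μp t v : ℝ) : ℝ :=
  if v * (κp - κm) * t ≤ (κp + μp - (κp - κm) * v) * sHS t ∧
     v * (μp - μm) * sHS t ≤ (κp + μp - (μp - μm) * v) * t then
    v * (1 - v) * ((κp - κm) * t - (μp - μm) * sHS t) ^ 2 /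
      (κp + μp - ((κp - κm) + (μp - μm)) * v)
  else if (κp + μp - (κp - κm) * v) * sHS t < v * (κp - κm) * t then
    (1 - v) * (v * (κp - κm) ^ 2 * t ^ 2 / (κp + μp - (κp - κm) * v)
      - (μp - μm) * (sHS t) ^ 2)
  else
    (1 - v) * (v * (μp - μm) ^ 2 * (sHS t) ^ 2 / (κp + μp - (μp - μm) * v)
      - (κp - κm) * t ^ 2)

/-- The Hashin–Shtrikman upper-bound function `f^HS(t; v)`:
the Voigt energy minus the correction `q(t; v)`. -/
noncomputable def fHS (κm κp μm μp t v : ℝ) : ℝ :=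
  (κm + v * (κp - κm)) * t ^ 2 + (μm + v * (μp - μm)) * (1 - t ^ 2)
    - qHS κm κp μm μp t v

set_option maxHeartbeats 1000000 in
set_option maxRecDepth 8000 in
/-- Closed form of the activating volume on the first branch: if
`v·Δκ·t ≤ d₂(v)·s`, `v·Δμ·s ≤ d₃(v)·t` and `f^HS(t;v) = c`, then the
discriminant `D` is nonnegative and `v` is given by the "negative" root of the
associated quadratic equation. -/
theorem hs_activating_volume_branch1
    (κm κp μm μp : ℝ) (hκm : 0 < κm) (hκ : κm < κp) (hμm : 0 < μm) (hμ : μm < μp)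
    (v : ℝ) (hv : v ∈ Set.Icc (0 : ℝ) 1) (t : ℝ) (ht : t ∈ Set.Icc (0 : ℝ) 1)
    (s : ℝ) (hs : s = Real.sqrt (1 - t ^ 2)) (c : ℝ)
    (hbr1 : v * (κp - κm) * t ≤ (κp + μp - (κp - κm) * v) * s)
    (hbr2 : v * (μp - μm) * s ≤ (κp + μp - (μp - μm) * v) * t)
    (hact : fHS κm κp μm μp t v = c)
    (D : ℝ)
    (hD : D = (c * ((μp - μm) + (κp - κm))
        + (1 - 2 * t ^ 2) * ((μp - μm) * κp - (κp - κm) * μp)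
        + (μp - μm) * (κp - κm) * (s + t) ^ 2) ^ 2
      - 4 * (μp - μm) * (κp - κm) * (κp + μp) * (s + t) ^ 2
        * (c + (t ^ 2 - 1) * μm - t ^ 2 * κm)) :
    0 ≤ D ∧
    v = 1 / 2 + (c * ((μp - μm) + (κp - κm))
        + (2 * t ^ 2 - 1) * ((κp - κm) * μp - (μp - μm) * κp)
        - Real.sqrt D) / (2 * (μp - μm) * (κp - κm) * (t + s) ^ 2) := by
  obtain ⟨hv0, hv1⟩ := hv
  obtain ⟨ht0, ht1⟩ := ht
  have ha : 0 < κp - κm := by linarith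
  have hb : 0 < μp - μm := by linarith
  have h1t : 0 ≤ 1 - t ^ 2 := by clear hact hD; nlinarith
  have hs2 : s ^ 2 = 1 - t ^ 2 := by rw [hs]; exact Real.sq_sqrt h1t
  have hs0 : 0 ≤ s := by rw [hs]; exact Real.sqrt_nonneg _
  have hs1 : s ≤ 1 := by clear hact hD; nlinarith
  have hst : 1 ≤ t + s := by clear hact hD; nlinarith
  have hK : 0 < κp + μp := by linarith
  have hd1 : 0 < (κp + μp - ((κp - κm) + (μp - μm)) * v) := by clear hact hD; nlinarith
  have hsHS : sHS t = s := by rw [sHS]; exact hs.symm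
  have hq : qHS κm κp μm μp t v
      = v * (1 - v) * (((κp - κm) * t - (μp - μm) * s) ^ 2) / (κp + μp - ((κp - κm) + (μp - μm)) * v) := by
    unfold qHS
    rw [hsHS, if_pos ⟨hbr1, hbr2⟩]
  have hE : v * (1 - v) * (((κp - κm) * t - (μp - μm) * s) ^ 2)
      = ((κm + v * (κp - κm)) * t ^ 2 + (μm + v * (μp - μm)) * (1 - t ^ 2) - c) * (κp + μp - ((κp - κm) + (μp - μm)) * v) := by
    have h := hact
    unfold fHS at h
    rw [hq] at h
    have key := div_mul_cancel₀ (v * (1 - v) * (((κp - κm) * t - (μp - μm) * s) ^ 2)) hd1.ne'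
    rw [← key, show v * (1 - v) * (((κp - κm) * t - (μp - μm) * s) ^ 2) / (κp + μp - ((κp - κm) + (μp - μm)) * v) = (κm + v * (κp - κm)) * t ^ 2 + (μm + v * (μp - μm)) * (1 - t ^ 2) - c by linarith]
  have hR : 0 ≤ ((κp - κm) * t ^ 2 + (μp - μm) * (1 - t ^ 2)) := by clear hact hD hq hE; nlinarith
  have hFK : (((κp - κm) * t ^ 2 + (μp - μm) * (1 - t ^ 2)) * (κp + μp - ((κp - κm) + (μp - μm)) * v) ^ 2 - (((κp - κm) * t - (μp - μm) * s) ^ 2) * ((1 - 2 * v) * (κp + μp) + ((κp - κm) + (μp - μm)) * v ^ 2)) * (κp + μp)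
      = (κp + μp - ((κp - κm) + (μp - μm)) * v) ^ 2 * ((κm + μm) * ((κp - κm) * t ^ 2 + (μp - μm) * (1 - t ^ 2)) + (μp - μm) * (κp - κm) * (s + t) ^ 2)
        + (((κp - κm) * t - (μp - μm) * s) ^ 2) * ((κm + μm) * v * (2 * (κp + μp) - ((κp - κm) + (μp - μm)) * v)) := by
    linear_combination (-((μp - μm) * ((κp - κm) + (μp - μm)) * ((κm + μm) + ((κp - κm) + (μp - μm)) * (1 - v)) ^ 2)) * hs2
  have hFK0 : 0 ≤ (((κp - κm) * t ^ 2 + (μp - μm) * (1 - t ^ 2)) * (κp + μp - ((κp - κm) + (μp - μm)) * v) ^ 2 - (((κp - κm) * t - (μp - μm) * s) ^ 2) * ((1 - 2 * v) * (κp + μp) + ((κp - κm) + (μp - μm)) * v ^ 2)) * (κp + μp) := by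
    rw [hFK]
    have t1 : 0 ≤ (κp + μp - ((κp - κm) + (μp - μm)) * v) ^ 2 * ((κm + μm) * ((κp - κm) * t ^ 2 + (μp - μm) * (1 - t ^ 2)) + (μp - μm) * (κp - κm) * (s + t) ^ 2) := by
      apply mul_nonneg (sq_nonneg _)
      have h2 : 0 ≤ (μp - μm) * (κp - κm) * (s + t) ^ 2 := by positivity
      have h3 : 0 ≤ (κm + μm) * ((κp - κm) * t ^ 2 + (μp - μm) * (1 - t ^ 2)) :=
        mul_nonneg (by linarith) hR
      linarith
    have t2 : 0 ≤ (((κp - κm) * t - (μp - μm) * s) ^ 2) * ((κm + μm) * v * (2 * (κp + μp) - ((κp - κm) + (μp - μm)) * v)) := by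
      apply mul_nonneg (sq_nonneg _)
      apply mul_nonneg (mul_nonneg (by linarith) hv0)
      linarith
    linarith
  have hF0 : 0 ≤ (((κp - κm) * t ^ 2 + (μp - μm) * (1 - t ^ 2)) * (κp + μp - ((κp - κm) + (μp - μm)) * v) ^ 2 - (((κp - κm) * t - (μp - μm) * s) ^ 2) * ((1 - 2 * v) * (κp + μp) + ((κp - κm) + (μp - μm)) * v ^ 2)) := (mul_nonneg_iff_of_pos_right hK).mp hFK0
  have hBd : ((((μp - μm) * (κp - κm) * (s + t) ^ 2) + (c * ((μp - μm) + (κp - κm)) + (2 * t ^ 2 - 1) * ((κp - κm) * μp - (μp - μm) * κp))) - 2 * ((μp - μm) * (κp - κm) * (s + t) ^ 2) * v) * (κp + μp - ((κp - κm) + (μp - μm)) * v) = (((κp - κm) * t ^ 2 + (μp - μm) * (1 - t ^ 2)) * (κp + μp - ((κp - κm) + (μp - μm)) * v) ^ 2 - (((κp - κm) * t - (μp - μm) * s) ^ 2) * ((1 - 2 * v) * (κp + μp) + ((κp - κm) + (μp - μm)) * v ^ 2)) := by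
    linear_combination ((κp - κm) + (μp - μm)) * hE + ((μp - μm) * ((κp - κm) + (μp - μm)) * ((1 - 2 * v) * (κm + μm) + ((κp - κm) + (μp - μm)) * (1 - 3 * v + 2 * v ^ 2))) * hs2
  have hBP : 0 ≤ (((μp - μm) * (κp - κm) * (s + t) ^ 2) + (c * ((μp - μm) + (κp - κm)) + (2 * t ^ 2 - 1) * ((κp - κm) * μp - (μp - μm) * κp))) - 2 * ((μp - μm) * (κp - κm) * (s + t) ^ 2) * v := by
    have : 0 ≤ ((((μp - μm) * (κp - κm) * (s + t) ^ 2) + (c * ((μp - μm) + (κp - κm)) + (2 * t ^ 2 - 1) * ((κp - κm) * μp - (μp - μm) * κp))) - 2 * ((μp - μm) * (κp - κm) * (s + t) ^ 2) * v) * (κp + μp - ((κp - κm) + (μp - μm)) * v) := by rw [hBd]; exact hF0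
    exact (mul_nonneg_iff_of_pos_right hd1).mp this
  have hC : D = (((μp - μm) * (κp - κm) * (s + t) ^ 2) + (c * ((μp - μm) + (κp - κm)) + (2 * t ^ 2 - 1) * ((κp - κm) * μp - (μp - μm) * κp))) ^ 2 + 4 * ((μp - μm) * (κp - κm) * (s + t) ^ 2) * ((κp + μp) * (κm * t ^ 2 + μm * (1 - t ^ 2) - c)) := by
    rw [hD]; ring
  have hQ : (κp + μp) * (κm * t ^ 2 + μm * (1 - t ^ 2) - c) = ((μp - μm) * (κp - κm) * (s + t) ^ 2) * v ^ 2 - (((μp - μm) * (κp - κm) * (s + t) ^ 2) + (c * ((μp - μm) + (κp - κm)) + (2 * t ^ 2 - 1) * ((κp - κm) * μp - (μp - μm) * κp))) * v := by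
    linear_combination -hE + ((μp - μm) * ((μp - μm) + (κp - κm)) * (v - v ^ 2)) * hs2
  have hDsq : D = ((((μp - μm) * (κp - κm) * (s + t) ^ 2) + (c * ((μp - μm) + (κp - κm)) + (2 * t ^ 2 - 1) * ((κp - κm) * μp - (μp - μm) * κp))) - 2 * ((μp - μm) * (κp - κm) * (s + t) ^ 2) * v) ^ 2 := by
    rw [hC, hQ]; ring
  have hD0 : 0 ≤ D := by rw [hDsq]; exact sq_nonneg _
  have hsqrtD : Real.sqrt D = (((μp - μm) * (κp - κm) * (s + t) ^ 2) + (c * ((μp - μm) + (κp - κm)) + (2 * t ^ 2 - 1) * ((κp - κm) * μp - (μp - μm) * κp))) - 2 * ((μp - μm) * (κp - κm) * (s + t) ^ 2) * v := by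
    rw [hDsq]
    exact Real.sqrt_sq hBP
  refine ⟨hD0, ?_⟩
  rw [hsqrtD]
  have hts : (0:ℝ) < (t + s) ^ 2 := by clear hact hD hq hE hFK hFK0 hF0 hBd hBP hC hQ hDsq hD0 hsqrtD; nlinarith
  have hY : (2 * (μp - μm) * (κp - κm) * (t + s) ^ 2)
      * (2 * (μp - μm) * (κp - κm) * (t + s) ^ 2)⁻¹ = 1 :=
    mul_inv_cancel₀ (ne_of_gt (mul_pos (mul_pos (by linarith) ha) hts))
  linear_combination (-(v - 1 / 2)) * hY
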